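/- For k ∈ ℕ, let H_k be the closed subspace of ℓ²(P) spanned by {e_{σ·b^n} : σ ∈ Σ_k, n ∈ ℕ}. Then for all σ, τ ∈ Σ_k and all l, m ∈ ℕ, the operator T_σ T_b^l ((T_b)*)^m (T_τ)* maps H_k into H_k. -/

import Mathlib

open scoped Classical

namespace BSpaper

/-- The single Baumslag–Solitar relator `a * b^c * (b^d * a)⁻¹` on two generators
(`true` plays the role of `a`, `false` the role of `b`). -/
def rels (c d : ℕ) : Set (FreeGroup Bool) :=
  {FreeGroup.of true * FreeGroup.of false ^ c * (FreeGroup.of false ^ d * FreeGroup.of true)⁻¹}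

/-- The Baumslag–Solitar group `BS(c,d) = ⟨a, b ∣ a b^c = b^d a⟩`. -/
abbrev Grp (c d : ℕ) := PresentedGroup (rels c d)

variable (c d : ℕ)

/-- The generator `a`. -/
def a : Grp c d := PresentedGroup.of true

/-- The generator `b`. -/
def b : Grp c d := PresentedGroup.of false

/-- The submonoid `P` of `BS(c,d)` generated by `a` and `b`. -/
def P : Submonoid (Grp c d) := Submonoid.closure {a c d, b c d}

/-- The word `b^{s₀} a b^{s₁} a ⋯ b^{s_{k-1}} a` associated to a list of digits `s_i < d`. -/
def wordStem : List (Fin d) → Grp c d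
  | [] => 1
  | i :: l => b c d ^ (i : ℕ) * a c d * wordStem l

/-- `Σ_k`: the set of stems of height `k`. -/
def SigmaSet (k : ℕ) : Set (Grp c d) :=
  {g | ∃ l : List (Fin d), l.length = k ∧ wordStem c d l = g}

/-- The data `(l, t)` of a normal-form decomposition `x = (b^{s₀} a ⋯ b^{s_{k-1}} a) * b^t`,
chosen by choice when it exists (it exists, uniquely, for every `x ∈ P`). -/
noncomputable def nf (x : Grp c d) : List (Fin d) × ℕ :=
  if h : ∃ p : List (Fin d) × ℕ, x = wordStem c d p.1 * b c d ^ p.2 then h.choose else ([], 0)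

/-- The stem of `x`, i.e. the stem part of the normal form of `x`. -/
noncomputable def stem (x : Grp c d) : Grp c d := wordStem c d (nf c d x).1

/-- The left-invariant partial order on `BS(c,d)`: `g ≤ h` iff `g⁻¹ * h ∈ P`. -/
def bsLe (g h : Grp c d) : Prop := g⁻¹ * h ∈ P c d

lemma a_mem_P : a c d ∈ P c d := Submonoid.subset_closure (Set.mem_insert _ _)

lemma b_mem_P : b c d ∈ P c d :=
  Submonoid.subset_closure (Set.mem_insert_of_mem _ rfl)

lemma wordStem_mem_P (l : List (Fin d)) : wordStem c d l ∈ P c d := by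
  induction l with
  | nil => exact one_mem _
  | cons i l ih =>
      exact mul_mem (mul_mem (pow_mem (b_mem_P c d) _) (a_mem_P c d)) ih

/-- `b` as an element of the submonoid `P`. -/
def bP : P c d := ⟨b c d, b_mem_P c d⟩

noncomputable abbrev l2P := lp (fun _ : P c d => ℂ) 2

/-- `H_k`: the closed subspace of `ℓ²(P)` spanned by `{e_{σ·bⁿ} : σ ∈ Σ_k, n ∈ ℕ}`. -/
noncomputable def Hk (k : ℕ) : Submodule ℂ (l2P c d) :=
  (Submodule.span ℂ {v : l2P c d | ∃ (l : List (Fin d)) (n : ℕ), l.length = k ∧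
    v = lp.single 2 (⟨wordStem c d l * b c d ^ n,
          mul_mem (wordStem_mem_P c d l) (pow_mem (b_mem_P c d) n)⟩ : P c d)
        (1 : ℂ)}).topologicalClosure


noncomputable def theta : Grp c d →* Multiplicative ℤ :=
  PresentedGroup.toGroup (f := fun x : Bool => if x then Multiplicative.ofAdd (1:ℤ) else 1)
    (by
      intro r hr
      rw [rels, Set.mem_singleton_iff] at hr
      subst hr
      simp)

@[simp] lemma theta_a : theta c d (a c d) = Multiplicative.ofAdd (1:ℤ) := by
  simp [theta, a]

@[simp] lemma theta_b : theta c d (b c d) = 1 := by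
  simp [theta, b]

lemma theta_wordStem (l : List (Fin d)) :
    theta c d (wordStem c d l) = Multiplicative.ofAdd (l.length : ℤ) := by
  induction l with
  | nil => simp [wordStem]
  | cons i l ih =>
      simp only [wordStem, map_mul, map_pow, theta_a, theta_b, ih, one_pow, one_mul,
        List.length_cons]
      rw [← ofAdd_add]
      push_cast
      ring_nf

lemma list_prod_height (L : List (Grp c d)) (hL : ∀ y ∈ L, y = a c d ∨ y = b c d) :
    ∃ n : ℕ, theta c d L.prod = Multiplicative.ofAdd (n : ℤ) ∧
      (n = 0 → ∃ t : ℕ, L.prod = b c d ^ t) := by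
  induction L with
  | nil => exact ⟨0, by simp, fun _ => ⟨0, by simp⟩⟩
  | cons y L ih =>
      obtain ⟨n, hn, hz⟩ := ih (fun z hz => hL z (List.mem_cons_of_mem _ hz))
      rcases hL y List.mem_cons_self with rfl | rfl
      · refine ⟨n + 1, ?_, by omega⟩
        rw [List.prod_cons, map_mul, theta_a, hn, ← ofAdd_add]
        congr 1
        push_cast
        ring
      · refine ⟨n, ?_, ?_⟩
        · rw [List.prod_cons, map_mul, theta_b, hn, one_mul]
        · intro h0
          obtain ⟨t, ht⟩ := hz h0
          exact ⟨t + 1, by rw [List.prod_cons, ht, pow_succ']⟩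

lemma mem_P_theta_one {g : Grp c d} (hg : g ∈ P c d) (h1 : theta c d g = 1) :
    ∃ t : ℕ, g = b c d ^ t := by
  obtain ⟨L, hL, rfl⟩ := Submonoid.exists_list_of_mem_closure hg
  obtain ⟨n, hn, hz⟩ := list_prod_height c d L (fun y hy => by
    rcases hL y hy with h | h
    · exact Or.inl h
    · exact Or.inr h)
  apply hz
  rw [h1] at hn
  have : (n : ℤ) = 0 := by
    have := hn.symm
    rwa [ofAdd_eq_one] at this
  exact_mod_cast this

lemma single_apply' (i j : P c d) :
    (lp.single 2 i (1:ℂ) : l2P c d) j = if j = i then 1 else 0 := by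
  rcases eq_or_ne j i with rfl | h
  · rw [lp.single_apply_self, if_pos rfl]
  · rw [lp.single_apply_ne _ _ _ h, if_neg h]

lemma coord_eq_inner (f : l2P c d) (z : P c d) :
    f z = @inner ℂ _ _ (lp.single 2 z (1:ℂ)) f := by
  rw [lp.inner_single_left]
  simp

open ContinuousLinearMap in
lemma adj_coord (A : l2P c d →L[ℂ] l2P c d) (u : l2P c d) (z : P c d) :
    (adjoint A u) z = @inner ℂ _ _ (A (lp.single 2 z (1:ℂ))) u := by
  rw [coord_eq_inner c d (adjoint A u) z, adjoint_inner_right]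

open ContinuousLinearMap in
lemma adj_T_coord (T : P c d → (l2P c d →L[ℂ] l2P c d))
    (hT : ∀ x y : P c d, T x (lp.single 2 y 1) = lp.single 2 (x * y) 1)
    (x : P c d) (u : l2P c d) (z : P c d) :
    (adjoint (T x) u) z = u (x * z) := by
  rw [adj_coord, hT, ← coord_eq_inner]

open ContinuousLinearMap in
lemma adj_T_pow_coord (T : P c d → (l2P c d →L[ℂ] l2P c d))
    (hT : ∀ x y : P c d, T x (lp.single 2 y 1) = lp.single 2 (x * y) 1)
    (x : P c d) (m : ℕ) (u : l2P c d) (z : P c d) :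
    (((adjoint (T x)) ^ m) u) z = u (x ^ m * z) := by
  induction m generalizing u with
  | zero => simp
  | succ m ih =>
      rw [pow_succ, ContinuousLinearMap.mul_apply, ih, adj_T_coord c d T hT, ← mul_assoc, ← pow_succ']

open ContinuousLinearMap in
lemma T_pow_single (T : P c d → (l2P c d →L[ℂ] l2P c d))
    (hT : ∀ x y : P c d, T x (lp.single 2 y 1) = lp.single 2 (x * y) 1)
    (x : P c d) (l : ℕ) (y : P c d) :
    (T x ^ l) (lp.single 2 y 1) = lp.single 2 (x ^ l * y) 1 := by
  induction l generalizing y with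
  | zero => simp
  | succ l ih =>
      rw [pow_succ, ContinuousLinearMap.mul_apply, hT, ih, ← mul_assoc, ← pow_succ]

set_option maxHeartbeats 2000000 in
open ContinuousLinearMap in
/-- For all σ, τ ∈ Σ_k (given by digit strings of length k) and all l, m ∈ ℕ, the
operator T_σ T_b^l ((T_b)*)^m (T_τ)* maps H_k into H_k. -/
theorem statement18 (c d : ℕ) (hc : 0 < c) (hd : 0 < d)
    (T : P c d → (l2P c d →L[ℂ] l2P c d))
    (hT : ∀ x y : P c d, T x (lp.single 2 y 1) = lp.single 2 (x * y) 1)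
    (k : ℕ) (σ τ : List (Fin d)) (hσ : σ.length = k) (hτ : τ.length = k) (l m : ℕ) :
    ∀ v ∈ Hk c d k,
      (T ⟨wordStem c d σ, wordStem_mem_P c d σ⟩ * T (bP c d) ^ l
          * adjoint (T (bP c d)) ^ m
          * adjoint (T ⟨wordStem c d τ, wordStem_mem_P c d τ⟩)) v ∈ Hk c d k := by
  classical
  set τP : P c d := ⟨wordStem c d τ, wordStem_mem_P c d τ⟩ with hτP
  set σP : P c d := ⟨wordStem c d σ, wordStem_mem_P c d σ⟩ with hσP
  set A : l2P c d →L[ℂ] l2P c d :=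
    T σP * T (bP c d) ^ l * adjoint (T (bP c d)) ^ m * adjoint (T τP) with hA
  intro v hv
  have hclosed : IsClosed ((Hk c d k : Set (l2P c d))) :=
    Submodule.isClosed_topologicalClosure _
  have hNclosed : IsClosed (((Hk c d k).comap (A : l2P c d →ₗ[ℂ] l2P c d) :
      Set (l2P c d))) := hclosed.preimage A.continuous
  suffices hle : Hk c d k ≤ (Hk c d k).comap (A : l2P c d →ₗ[ℂ] l2P c d) by
    exact hle hv
  refine Submodule.topologicalClosure_minimal _ ?_ hNclosed
  rw [Submodule.span_le]
  rintro w ⟨ρ, n, hρ, rfl⟩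
  simp only [SetLike.mem_coe, Submodule.mem_comap, ContinuousLinearMap.coe_coe]
  -- the key computation
  set yρ : P c d := ⟨wordStem c d ρ * b c d ^ n,
    mul_mem (wordStem_mem_P c d ρ) (pow_mem (b_mem_P c d) n)⟩ with hyρ
  set g₀ : Grp c d := (wordStem c d τ * b c d ^ m)⁻¹ * (wordStem c d ρ * b c d ^ n) with hg₀
  set u₂ : l2P c d := ((adjoint (T (bP c d))) ^ m) ((adjoint (T τP)) (lp.single 2 yρ 1))
    with hu₂def
  have hApp : A (lp.single 2 yρ 1) = (T σP) ((T (bP c d) ^ l) u₂) := by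
    rw [hA]
    simp only [ContinuousLinearMap.mul_apply]
    rfl
  have hcoord : ∀ z : P c d, u₂ z = if (z : Grp c d) = g₀ then 1 else 0 := by
    intro z
    rw [hu₂def, adj_T_pow_coord c d T hT, adj_T_coord c d T hT, single_apply']
    congr 1
    rw [eq_iff_iff]
    constructor
    · intro h
      have h' := congrArg (Subtype.val) h
      have h'' : wordStem c d τ * (b c d ^ m * (z : Grp c d)) = wordStem c d ρ * b c d ^ n := h'
      rw [hg₀, ← h'']
      group
    · intro h
      apply Subtype.ext
      show wordStem c d τ * (b c d ^ m * (z : Grp c d)) = wordStem c d ρ * b c d ^ n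
      rw [h, hg₀]
      group
  by_cases hg : g₀ ∈ P c d
  · have hu2 : u₂ = lp.single 2 (⟨g₀, hg⟩ : P c d) 1 := by
      apply lp.ext
      funext z
      rw [hcoord z, single_apply']
      congr 1
      rw [eq_iff_iff, Subtype.ext_iff]
    have hθ : theta c d g₀ = 1 := by
      rw [hg₀]
      simp [theta_wordStem, hτ, hρ]
    obtain ⟨t, ht⟩ := mem_P_theta_one c d hg hθ
    have hfinal : A (lp.single 2 yρ 1) =
        lp.single 2 (σP * (bP c d ^ l * ⟨g₀, hg⟩)) 1 := by
      rw [hApp, hu2, T_pow_single c d T hT, hT]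
    refine Submodule.le_topologicalClosure _ (Submodule.subset_span ⟨σ, l + t, hσ, ?_⟩)
    rw [hfinal]
    congr 1
    apply Subtype.ext
    simp only [Submonoid.coe_mul, SubmonoidClass.coe_pow, hσP]
    show wordStem c d σ * (b c d ^ l * g₀) = wordStem c d σ * b c d ^ (l + t)
    rw [ht, ← pow_add]
  · have hu2 : u₂ = 0 := by
      apply lp.ext
      funext z
      rw [hcoord z]
      have : ¬((z : Grp c d) = g₀) := fun h => hg (h ▸ z.2)
      rw [if_neg this]
      rfl
    rw [hApp, hu2, map_zero, map_zero]
    exact zero_mem _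


end BSpaper
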